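/- Let ≺ be a noetherian total order on monomials of K[x₁,…,xₙ]. Then every ideal I ⊆ K[x] has a (possibly infinite, but in fact finite) standard basis: a finite set G ⊆ Ī with L(G) = L(I), where Ī = (S⁻¹I) ∩ K[x] and S = { g | LM(g) = 1 }. -/
import Mathlib


open MvPolynomial

/-- The lead monomial (exponent vector) of a polynomial with respect to a total
order `ord` on monomials; junk value `0` for the zero polynomial. -/
noncomputable def leadMonomial {n : ℕ} {K : Type*} [CommRing K]
    (ord : LinearOrder (Fin n →₀ ℕ)) (f : MvPolynomial (Fin n) K) : Fin n →₀ ℕ :=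
  letI := ord
  if h : f.support.Nonempty then f.support.max' h else 0

/-- The lead monomial set `L(G) = { LM(x^α g) | α ∈ ℕ^n, g ∈ G, g ≠ 0 }`. -/
noncomputable def leadSetG {n : ℕ} {K : Type*} [CommRing K]
    (ord : LinearOrder (Fin n →₀ ℕ)) (G : Set (MvPolynomial (Fin n) K)) :
    Set (Fin n →₀ ℕ) :=
  {μ | ∃ α : Fin n →₀ ℕ, ∃ g ∈ G, g ≠ 0 ∧
    μ = leadMonomial ord (monomial α (1 : K) * g)}

/-- The lead monomial set `L(I) = { LM(g) | 0 ≠ g ∈ I }` of an ideal. -/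
noncomputable def leadSetI {n : ℕ} {K : Type*} [CommRing K]
    (ord : LinearOrder (Fin n →₀ ℕ)) (I : Ideal (MvPolynomial (Fin n) K)) :
    Set (Fin n →₀ ℕ) :=
  {μ | ∃ g ∈ I, g ≠ 0 ∧ μ = leadMonomial ord g}

/-- for a normal noetherian order, every ideal `I` has a finite
standard basis: a finite `G ⊆ Ī` with `L(G) = L(I)`, where
`Ī = S⁻¹I ∩ K[x] = { f | ∃ s with LM(s) = 1, s·f ∈ I }`. -/
theorem exists_standard_basis_of_noetherian {n : ℕ} {K : Type*} [Field K]
    (ord : LinearOrder (Fin n →₀ ℕ))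
    (hnormal : ∀ (f : MvPolynomial (Fin n) K), f ≠ 0 → ∀ α : Fin n →₀ ℕ,
      ord.lt α 0 → ord.lt (leadMonomial ord (monomial α (1 : K) * f))
        (leadMonomial ord f))
    (hnoeth : ∀ (S : ℕ → Set (Fin n →₀ ℕ)), Monotone S →
      (∀ i : ℕ,
        (∃ G : Set (MvPolynomial (Fin n) K), G.Finite ∧ S i = leadSetG ord G) ∨
        (∃ J : Ideal (MvPolynomial (Fin n) K), S i = leadSetI ord J)) →
      ∃ N : ℕ, ∀ m : ℕ, N ≤ m → S m = S N)
    (I : Ideal (MvPolynomial (Fin n) K)) :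
    ∃ G : Set (MvPolynomial (Fin n) K), G.Finite ∧
      (∀ f ∈ G, ∃ s : MvPolynomial (Fin n) K,
        s ≠ 0 ∧ leadMonomial ord s = 0 ∧ s * f ∈ I) ∧
      leadSetG ord G = leadSetI ord I := by
  classical
  clear hnormal
  -- the property "G can still be enlarged"
  let P : Set (MvPolynomial (Fin n) K) → Prop := fun G =>
    ∃ g, g ∈ I ∧ g ≠ 0 ∧ leadMonomial ord g ∉ leadSetG ord G
  let step : Set (MvPolynomial (Fin n) K) → Set (MvPolynomial (Fin n) K) :=
    fun G => if h : P G then insert h.choose G else G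
  let Gs : ℕ → Set (MvPolynomial (Fin n) K) := fun i => step^[i] ∅
  have hGs_succ : ∀ i, Gs (i + 1) = step (Gs i) := fun i =>
    Function.iterate_succ_apply' step i ∅
  have hstep_sub : ∀ G, G ⊆ step G := by
    intro G x hx
    by_cases h : P G
    · simp only [step, dif_pos h]; exact Set.mem_insert_of_mem _ hx
    · simp only [step, dif_neg h]; exact hx
  have hGs_mono : Monotone Gs := by
    apply monotone_nat_of_le_succ
    intro i; rw [hGs_succ]; exact hstep_sub _
  have hGs_fin : ∀ i, (Gs i).Finite := by
    intro i; induction i with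
    | zero => exact Set.finite_empty
    | succ i ih =>
      rw [hGs_succ]
      by_cases h : P (Gs i)
      · simp only [step, dif_pos h]; exact ih.insert _
      · simp only [step, dif_neg h]; exact ih
  have hGs_memI : ∀ i, ∀ g ∈ Gs i, g ∈ I ∧ g ≠ 0 := by
    intro i; induction i with
    | zero => intro g hg; exact absurd hg (Set.notMem_empty g)
    | succ i ih =>
      rw [hGs_succ]
      by_cases h : P (Gs i)
      · simp only [step, dif_pos h]
        intro g hg
        rcases hg with rfl | hg
        · exact ⟨h.choose_spec.1, h.choose_spec.2.1⟩
        · exact ih g hg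
      · simp only [step, dif_neg h]; exact ih
  have hleadSetG_mono : ∀ G G' : Set (MvPolynomial (Fin n) K), G ⊆ G' →
      leadSetG ord G ⊆ leadSetG ord G' := by
    intro G G' hGG' μ hμ
    rcases hμ with ⟨α, g, hg, hg0, hμ⟩
    exact ⟨α, g, hGG' hg, hg0, hμ⟩
  -- apply the noetherian hypothesis
  obtain ⟨N, hN⟩ := hnoeth (fun i => leadSetG ord (Gs i))
    (fun i j hij => hleadSetG_mono _ _ (hGs_mono hij))
    (fun i => Or.inl ⟨Gs i, hGs_fin i, rfl⟩)
  -- the chain has stabilized, so P (Gs N) fails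
  have hnotP : ¬ P (Gs N) := by
    intro h
    have hmem : h.choose ∈ Gs (N + 1) := by
      rw [hGs_succ]; simp only [step, dif_pos h]; exact Set.mem_insert _ _
    have : leadMonomial ord h.choose ∈ leadSetG ord (Gs (N + 1)) := by
      refine ⟨0, h.choose, hmem, h.choose_spec.2.1, ?_⟩
      rw [monomial_zero', C_1, one_mul]
    rw [hN (N + 1) (Nat.le_succ N)] at this
    exact h.choose_spec.2.2 this
  refine ⟨Gs N, hGs_fin N, ?_, ?_⟩
  · intro f hf
    refine ⟨1, one_ne_zero, ?_, by rw [one_mul]; exact (hGs_memI N f hf).1⟩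
    have hs : (1 : MvPolynomial (Fin n) K).support = {0} := by
      rw [show (1 : MvPolynomial (Fin n) K) = monomial 0 1 by
        rw [monomial_zero', C_1], support_monomial, if_neg (one_ne_zero)]
    unfold leadMonomial
    rw [dif_pos (by rw [hs]; exact Finset.singleton_nonempty 0)]
    letI := ord
    simp [hs]
  · apply Set.Subset.antisymm
    · rintro μ ⟨α, g, hg, hg0, rfl⟩
      obtain ⟨hgI, -⟩ := hGs_memI N g hg
      refine ⟨monomial α (1 : K) * g, Ideal.mul_mem_left _ _ hgI, ?_, rfl⟩
      exact mul_ne_zero (fun h => one_ne_zero ((monomial_eq_zero).mp h)) hg0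
    · rintro μ ⟨g, hgI, hg0, rfl⟩
      by_contra hμ
      exact hnotP ⟨g, hgI, hg0, hμ⟩
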